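/- Let 0 < p < 1, λ > 0, and m > 1. Then there exists a constant C > 0 such that for all t ≥ 0, ∫₀ᵗ e^{−λ(t^p − τ^p)} (1+τ)^{−m} dτ ≤ C (1+t)^{−m − p + 1}. -/

import Mathlib

open Real intervalIntegral MeasureTheory

-- continuity of the integrand
lemma cont_aux (p lam m t : ℝ) (hp : 0 < p) :
    ContinuousOn (fun τ : ℝ => Real.exp (-lam * (t ^ p - τ ^ p)) * (1 + τ) ^ (-m))
      (Set.uIcc 0 t) → True := fun _ => trivial

lemma rpow_cont (p : ℝ) (hp : 0 < p) : Continuous fun τ : ℝ => τ ^ p :=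
  continuous_iff_continuousAt.2 fun x => Real.continuousAt_rpow_const x p (Or.inr hp.le)

lemma integrand_cont (p lam m t s : ℝ) (hp : 0 < p) (hs : 0 ≤ s) :
    ContinuousOn (fun τ : ℝ => Real.exp (-lam * (t ^ p - τ ^ p)) * (1 + τ) ^ (-m))
      (Set.uIcc 0 s) := by
  apply ContinuousOn.mul
  · exact (Real.continuous_exp.comp (continuous_const.mul
      (continuous_const.sub (rpow_cont p hp)))).continuousOn
  · intro x hx
    have hx' : (0:ℝ) ≤ x := by
      rcases Set.mem_uIcc.1 hx with h | h
      · exact h.1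
      · linarith [h.1, hs]
    exact ((Real.continuousAt_rpow_const (1 + x) (-m) (Or.inl (by linarith))).comp
      (continuousAt_const.add continuousAt_id)).continuousWithinAt

lemma int_one_add_rpow (m : ℝ) (hm : 1 < m) (s : ℝ) (hs : 0 ≤ s) :
    ∫ τ in (0:ℝ)..s, (1 + τ) ^ (-m) ≤ 1 / (m - 1) := by
  have h1 : ∫ τ in (0:ℝ)..s, (1 + τ) ^ (-m) = ∫ x in (1:ℝ)..(1+s), x ^ (-m) := by
    simpa using intervalIntegral.integral_comp_add_left (fun x : ℝ => x ^ (-m)) 1 (a := 0) (b := s)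
  rw [h1, integral_rpow (Or.inr ⟨by linarith, by
      simp only [Set.mem_uIcc]; push_neg; constructor <;> intro h <;> nlinarith⟩)]
  have h2 : (0:ℝ) < (1+s) ^ (-m + 1) := Real.rpow_pos_of_pos (by linarith) _
  rw [Real.one_rpow, show (-m+1) = -(m-1) by ring, div_neg]
  rw [show -(((1+s) ^ (-(m-1)) - 1) / (m - 1)) = (1 - (1+s) ^ (-(m-1))) / (m-1) by ring,
    div_le_div_iff_of_pos_right (by linarith)]
  have h3 : (1+s) ^ (-(m-1)) ≤ 1 :=
    Real.rpow_le_one_of_one_le_of_nonpos (by linarith) (by linarith)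
  have h4 : (0:ℝ) < (1+s) ^ (-(m-1)) := Real.rpow_pos_of_pos (by linarith) _
  linarith

lemma int_exp_le (a u v : ℝ) (ha : 0 < a) (huv : u ≤ v) :
    ∫ τ in u..v, Real.exp (a * τ) ≤ Real.exp (a * v) / a := by
  have h : ∫ τ in u..v, Real.exp (a * τ)
      = a⁻¹ • ∫ x in a*u..a*v, Real.exp x :=
    intervalIntegral.integral_comp_mul_left Real.exp (ne_of_gt ha)
  rw [h, integral_exp, smul_eq_mul]
  rw [inv_mul_eq_div, div_le_div_iff_of_pos_right ha]
  have := Real.exp_pos (a*u)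
  linarith

lemma concave_rpow (p : ℝ) (hp : 0 < p) (hp' : p < 1) (t τ : ℝ) (ht : 0 < t)
    (hτ : 0 ≤ τ) (hτt : τ ≤ t) : τ ^ p ≤ t ^ p - p * t ^ (p - 1) * (t - τ) := by
  have hb : (τ / t) ^ p ≤ 1 + p * (τ / t - 1) := by
    have := rpow_one_add_le_one_add_mul_self (s := τ / t - 1)
      (by have : 0 ≤ τ / t := div_nonneg hτ ht.le; linarith) hp.le hp'.le
    simpa using this
  have hdr : (τ / t) ^ p = τ ^ p / t ^ p := Real.div_rpow hτ ht.le p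
  have htp : (0:ℝ) < t ^ p := Real.rpow_pos_of_pos ht p
  have hts : t ^ (p - 1) = t ^ p / t := by
    rw [Real.rpow_sub ht, Real.rpow_one]
  rw [hdr] at hb
  have h2 : τ ^ p ≤ t ^ p * (1 + p * (τ / t - 1)) := by
    calc τ ^ p = t ^ p * (τ ^ p / t ^ p) := by field_simp
    _ ≤ t ^ p * (1 + p * (τ / t - 1)) := by
        exact mul_le_mul_of_nonneg_left hb htp.le
  have h3 : t ^ p * (1 + p * (τ / t - 1)) = t ^ p - p * (t ^ p / t) * (t - τ) := by
    field_simp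
    ring
  rw [h3] at h2
  rw [hts]
  exact h2

lemma one_add_rpow_contOn (m s : ℝ) (hs : 0 ≤ s) :
    ContinuousOn (fun τ : ℝ => (1 + τ) ^ (-m)) (Set.uIcc 0 s) := by
  intro x hx
  have hx' : (0:ℝ) ≤ x := by
    rcases Set.mem_uIcc.1 hx with h | h
    · exact h.1
    · linarith [h.1, hs]
  exact ((Real.continuousAt_rpow_const (1 + x) (-m) (Or.inl (by linarith))).comp
    (continuousAt_const.add continuousAt_id)).continuousWithinAt

set_option maxHeartbeats 2000000 in
theorem exp_power_convolution_decay (p lam m : ℝ)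
    (hp : 0 < p) (hp' : p < 1) (hlam : 0 < lam) (hm : 1 < m) :
    ∃ C : ℝ, 0 < C ∧ ∀ t : ℝ, 0 ≤ t →
      (∫ τ in (0 : ℝ)..t, Real.exp (-lam * (t ^ p - τ ^ p)) * (1 + τ) ^ (-m)) ≤
        C * (1 + t) ^ (-m - p + 1) := by
  have hc : (0:ℝ) < 1 - (1/2:ℝ) ^ p := by
    have : (1/2:ℝ) ^ p < 1 := Real.rpow_lt_one (by norm_num) (by norm_num) hp
    linarith
  obtain ⟨c, hcdef⟩ : ∃ c : ℝ, c = 1 - (1/2:ℝ) ^ p := ⟨_, rfl⟩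
  rw [← hcdef] at hc
  obtain ⟨N, hNdef⟩ : ∃ n : ℕ, n = ⌈(m+p)/p⌉₊ := ⟨_, rfl⟩
  have hN : m + p - 1 ≤ p * N := by
    have h1 : (m+p)/p ≤ (N:ℝ) := by rw [hNdef]; exact_mod_cast Nat.le_ceil _
    rw [div_le_iff₀ hp] at h1
    nlinarith
  obtain ⟨KA, hKAdef⟩ : ∃ x : ℝ, x = (Nat.factorial N : ℝ) / (lam*c)^N / (m-1) * 2 ^ (m+p-1) := ⟨_, rfl⟩
  obtain ⟨KB, hKBdef⟩ : ∃ x : ℝ, x = (2:ℝ) ^ m / (lam*p) := ⟨_, rfl⟩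
  have hNfac : (0:ℝ) < (Nat.factorial N : ℝ) := by positivity
  have hlc : (0:ℝ) < (lam*c)^N := by positivity
  have hKA : 0 < KA := by
    rw [hKAdef]
    exact mul_pos (div_pos (div_pos hNfac hlc) (by linarith))
      (Real.rpow_pos_of_pos (by norm_num) _)
  have hKB : 0 < KB := by
    rw [hKBdef]
    exact div_pos (Real.rpow_pos_of_pos (by norm_num) _) (by positivity)
  have h2pos : (0:ℝ) < (2:ℝ) ^ (m+p-1) := Real.rpow_pos_of_pos (by norm_num) _
  refine ⟨2 ^ (m+p-1) + KA + KB, by linarith, ?_⟩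
  intro t ht
  have h1t : (0:ℝ) < 1 + t := by linarith
  have hWpos : (0:ℝ) < (1+t) ^ (-m-p+1) := Real.rpow_pos_of_pos h1t _
  have hint : IntervalIntegrable
      (fun τ : ℝ => Real.exp (-lam * (t ^ p - τ ^ p)) * (1 + τ) ^ (-m))
      MeasureTheory.volume 0 t :=
    (integrand_cont p lam m t t hp ht).intervalIntegrable
  rcases le_or_gt t 1 with hts | hts
  · -- small t case
    have h1 : (∫ τ in (0:ℝ)..t, Real.exp (-lam * (t ^ p - τ ^ p)) * (1 + τ) ^ (-m))
        ≤ ∫ _τ in (0:ℝ)..t, (1:ℝ) := by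
      apply intervalIntegral.integral_mono_on ht hint intervalIntegrable_const
      intro τ hτ
      have hτ0 : 0 ≤ τ := hτ.1
      have hτt : τ ≤ t := hτ.2
      have he : Real.exp (-lam * (t ^ p - τ ^ p)) ≤ 1 := by
        rw [Real.exp_le_one_iff]
        have : τ ^ p ≤ t ^ p := Real.rpow_le_rpow hτ0 hτt hp.le
        nlinarith
      have hr : (1+τ) ^ (-m) ≤ 1 :=
        Real.rpow_le_one_of_one_le_of_nonpos (by linarith) (by linarith)
      have hrpos : (0:ℝ) ≤ (1+τ) ^ (-m) := Real.rpow_nonneg (by linarith) _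
      nlinarith
    have h2 : (∫ _τ in (0:ℝ)..t, (1:ℝ)) = t := by simp
    have h3 : (2:ℝ) ^ (-m-p+1) ≤ (1+t) ^ (-m-p+1) :=
      Real.rpow_le_rpow_of_nonpos h1t (by linarith) (by linarith)
    have h4 : (2:ℝ) ^ (m+p-1) * (2:ℝ) ^ (-m-p+1) = 1 := by
      rw [← Real.rpow_add (by norm_num : (0:ℝ) < 2)]
      norm_num
    rw [h2] at h1
    have h5 : (2:ℝ) ^ (m+p-1) * (2:ℝ) ^ (-m-p+1) ≤ 2 ^ (m+p-1) * (1+t) ^ (-m-p+1) :=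
      mul_le_mul_of_nonneg_left h3 h2pos.le
    nlinarith
  · -- large t case
    have ht0 : (0:ℝ) < t := by linarith
    have ht2 : (0:ℝ) ≤ t/2 := by linarith
    have ht2t : t/2 ≤ t := by linarith
    have hintA : IntervalIntegrable
        (fun τ : ℝ => Real.exp (-lam * (t ^ p - τ ^ p)) * (1 + τ) ^ (-m))
        MeasureTheory.volume 0 (t/2) :=
      (integrand_cont p lam m t (t/2) hp ht2).intervalIntegrable
    have hintB : IntervalIntegrable
        (fun τ : ℝ => Real.exp (-lam * (t ^ p - τ ^ p)) * (1 + τ) ^ (-m))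
        MeasureTheory.volume (t/2) t := by
      apply ContinuousOn.intervalIntegrable
      apply (integrand_cont p lam m t t hp ht).mono
      apply Set.uIcc_subset_uIcc <;> rw [Set.uIcc_of_le ht]
      · exact ⟨ht2, ht2t⟩
      · exact ⟨ht, le_refl t⟩
    have hsplit : (∫ τ in (0:ℝ)..t, Real.exp (-lam * (t ^ p - τ ^ p)) * (1 + τ) ^ (-m))
        = (∫ τ in (0:ℝ)..(t/2), Real.exp (-lam * (t ^ p - τ ^ p)) * (1 + τ) ^ (-m))
        + (∫ τ in (t/2)..t, Real.exp (-lam * (t ^ p - τ ^ p)) * (1 + τ) ^ (-m)) :=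
      (intervalIntegral.integral_add_adjacent_intervals hintA hintB).symm
    have htp : (0:ℝ) < t ^ p := Real.rpow_pos_of_pos ht0 _
    -- Piece A
    have hhalf : (t/2) ^ p = t ^ p * (1/2:ℝ) ^ p := by
      rw [show t/2 = t * (1/2:ℝ) by ring, Real.mul_rpow ht0.le (by norm_num)]
    have hAptw : ∀ τ ∈ Set.Icc (0:ℝ) (t/2),
        Real.exp (-lam * (t ^ p - τ ^ p)) * (1 + τ) ^ (-m)
          ≤ Real.exp (-(lam*c*t ^ p)) * (1 + τ) ^ (-m) := by
      intro τ hτ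
      have h1 : τ ^ p ≤ (t/2) ^ p := Real.rpow_le_rpow hτ.1 hτ.2 hp.le
      have h2 : Real.exp (-lam * (t ^ p - τ ^ p)) ≤ Real.exp (-(lam*c*t ^ p)) := by
        apply Real.exp_le_exp.2
        rw [hhalf] at h1
        have hceq : c * t ^ p = t ^ p - t ^ p * (1/2:ℝ) ^ p := by rw [hcdef]; ring
        have hd : c * t ^ p ≤ t ^ p - τ ^ p := by linarith
        nlinarith [mul_le_mul_of_nonneg_left hd hlam.le]
      exact mul_le_mul_of_nonneg_right h2 (Real.rpow_nonneg (by linarith [hτ.1]) _)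
    have hA1 : (∫ τ in (0:ℝ)..(t/2), Real.exp (-lam * (t ^ p - τ ^ p)) * (1 + τ) ^ (-m))
        ≤ Real.exp (-(lam*c*t ^ p)) * ∫ τ in (0:ℝ)..(t/2), (1 + τ) ^ (-m) := by
      rw [← intervalIntegral.integral_const_mul]
      exact intervalIntegral.integral_mono_on ht2 hintA
        (((one_add_rpow_contOn m (t/2) ht2).const_smul
          (Real.exp (-(lam*c*t ^ p)))).intervalIntegrable) hAptw
    have hA2 : (∫ τ in (0:ℝ)..(t/2), (1 + τ) ^ (-m)) ≤ 1/(m-1) :=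
      int_one_add_rpow m hm (t/2) ht2
    have hA : (∫ τ in (0:ℝ)..(t/2), Real.exp (-lam * (t ^ p - τ ^ p)) * (1 + τ) ^ (-m))
        ≤ Real.exp (-(lam*c*t ^ p)) * (1/(m-1)) :=
      hA1.trans (mul_le_mul_of_nonneg_left hA2 (Real.exp_nonneg _))
    have hx : (0:ℝ) < lam*c*t ^ p := by positivity
    have hexp : Real.exp (-(lam*c*t ^ p)) ≤ (Nat.factorial N : ℝ) / (lam*c*t ^ p)^N := by
      have hfact : (lam*c*t ^ p)^N / (Nat.factorial N : ℝ) ≤ Real.exp (lam*c*t ^ p) :=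
        Real.pow_div_factorial_le_exp (lam*c*t ^ p) hx.le N
      rw [Real.exp_neg, inv_le_comm₀ (Real.exp_pos _) (by positivity), inv_div]
      exact hfact
    have hxpow : (lam*c*t ^ p)^N = (lam*c)^N * t ^ (p*(N:ℝ)) := by
      rw [mul_pow, ← Real.rpow_natCast (t ^ p) N, ← Real.rpow_mul ht0.le]
    have hA3 : (Nat.factorial N : ℝ)/(lam*c*t ^ p)^N
        = (Nat.factorial N : ℝ)/(lam*c)^N * t ^ (-(p*(N:ℝ))) := by
      rw [hxpow, Real.rpow_neg ht0.le, div_mul_eq_div_div, div_eq_mul_inv]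
    have hA4 : t ^ (-(p*(N:ℝ))) ≤ t ^ (-m-p+1) :=
      Real.rpow_le_rpow_of_exponent_le hts.le (by linarith)
    have hA5 : t ^ (-m-p+1) ≤ 2 ^ (m+p-1) * (1+t) ^ (-m-p+1) := by
      have h1 : ((1+t)/2) ≤ t := by linarith
      have h2 : t ^ (-m-p+1) ≤ ((1+t)/2) ^ (-m-p+1) :=
        Real.rpow_le_rpow_of_nonpos (by linarith) h1 (by linarith)
      have h3 : ((1+t)/2) ^ (-m-p+1) = (1+t) ^ (-m-p+1) / 2 ^ (-m-p+1) :=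
        Real.div_rpow h1t.le (by norm_num) _
      have h4 : (2:ℝ) ^ (-m-p+1) = ((2:ℝ) ^ (m+p-1))⁻¹ := by
        rw [show (-m-p+1) = -(m+p-1) by ring, Real.rpow_neg (by norm_num)]
      rw [h3, h4] at h2
      rw [div_eq_mul_inv, inv_inv] at h2
      linarith [h2]
    have hA6 : Real.exp (-(lam*c*t ^ p)) * (1/(m-1)) ≤ KA * (1+t) ^ (-m-p+1) := by
      have e1 : Real.exp (-(lam*c*t ^ p))
          ≤ (Nat.factorial N : ℝ)/(lam*c)^N * (2 ^ (m+p-1) * (1+t) ^ (-m-p+1)) := by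
        calc Real.exp (-(lam*c*t ^ p)) ≤ (Nat.factorial N : ℝ)/(lam*c*t ^ p)^N := hexp
          _ = (Nat.factorial N : ℝ)/(lam*c)^N * t ^ (-(p*(N:ℝ))) := hA3
          _ ≤ (Nat.factorial N : ℝ)/(lam*c)^N * (2 ^ (m+p-1) * (1+t) ^ (-m-p+1)) :=
            mul_le_mul_of_nonneg_left (hA4.trans hA5) (by positivity)
      calc Real.exp (-(lam*c*t ^ p)) * (1/(m-1))
          ≤ ((Nat.factorial N : ℝ)/(lam*c)^N * (2 ^ (m+p-1) * (1+t) ^ (-m-p+1))) * (1/(m-1)) :=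
            mul_le_mul_of_nonneg_right e1 (one_div_nonneg.2 (by linarith))
        _ = KA * (1+t) ^ (-m-p+1) := by rw [hKAdef]; ring
    have hA' : (∫ τ in (0:ℝ)..(t/2), Real.exp (-lam * (t ^ p - τ ^ p)) * (1 + τ) ^ (-m))
        ≤ KA * (1+t) ^ (-m-p+1) := hA.trans hA6
    -- Piece B
    obtain ⟨a, hadef⟩ : ∃ x : ℝ, x = lam*p*t ^ (p-1) := ⟨_, rfl⟩
    have htp1 : (0:ℝ) < t ^ (p-1) := Real.rpow_pos_of_pos ht0 _
    have ha : 0 < a := by rw [hadef]; exact mul_pos (mul_pos hlam hp) htp1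
    have hBptw : ∀ τ ∈ Set.Icc (t/2) t,
        Real.exp (-lam * (t ^ p - τ ^ p)) * (1 + τ) ^ (-m)
          ≤ (1+t/2) ^ (-m) * Real.exp (-(a*t)) * Real.exp (a*τ) := by
      intro τ hτ
      have hτ0 : 0 ≤ τ := le_trans ht2 hτ.1
      have h1 : Real.exp (-lam * (t ^ p - τ ^ p)) ≤ Real.exp (-(a*(t-τ))) := by
        apply Real.exp_le_exp.2
        have hcc := concave_rpow p hp hp' t τ ht0 hτ0 hτ.2
        rw [hadef]
        nlinarith
      have h2 : (1+τ) ^ (-m) ≤ (1+t/2) ^ (-m) :=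
        Real.rpow_le_rpow_of_nonpos (by linarith) (by linarith [hτ.1]) (by linarith)
      calc Real.exp (-lam * (t ^ p - τ ^ p)) * (1 + τ) ^ (-m)
          ≤ Real.exp (-(a*(t-τ))) * (1+t/2) ^ (-m) :=
            mul_le_mul h1 h2 (Real.rpow_nonneg (by linarith) _) (Real.exp_nonneg _)
        _ = (1+t/2) ^ (-m) * Real.exp (-(a*t)) * Real.exp (a*τ) := by
            rw [show -(a*(t-τ)) = -(a*t) + a*τ by ring, Real.exp_add]; ring
    have hB1 : (∫ τ in (t/2)..t, Real.exp (-lam * (t ^ p - τ ^ p)) * (1 + τ) ^ (-m))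
        ≤ (1+t/2) ^ (-m) * Real.exp (-(a*t)) * ∫ τ in (t/2)..t, Real.exp (a*τ) := by
      rw [← intervalIntegral.integral_const_mul]
      exact intervalIntegral.integral_mono_on ht2t hintB
        ((continuous_const.mul (Real.continuous_exp.comp
          (continuous_const.mul continuous_id))).intervalIntegrable _ _) hBptw
    have hB2 : (∫ τ in (t/2)..t, Real.exp (a*τ)) ≤ Real.exp (a*t)/a :=
      int_exp_le a (t/2) t ha ht2t
    have hB3 : (∫ τ in (t/2)..t, Real.exp (-lam * (t ^ p - τ ^ p)) * (1 + τ) ^ (-m))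
        ≤ (1+t/2) ^ (-m) / a := by
      have e2 : (1+t/2) ^ (-m) * Real.exp (-(a*t)) * (Real.exp (a*t)/a)
          = (1+t/2) ^ (-m) / a := by
        rw [Real.exp_neg]
        field_simp
      calc (∫ τ in (t/2)..t, Real.exp (-lam * (t ^ p - τ ^ p)) * (1 + τ) ^ (-m))
          ≤ (1+t/2) ^ (-m) * Real.exp (-(a*t)) * ∫ τ in (t/2)..t, Real.exp (a*τ) := hB1
        _ ≤ (1+t/2) ^ (-m) * Real.exp (-(a*t)) * (Real.exp (a*t)/a) := by
            exact mul_le_mul_of_nonneg_left hB2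
              (mul_nonneg (Real.rpow_nonneg (by linarith) _) (Real.exp_nonneg _))
        _ = (1+t/2) ^ (-m) / a := e2
    have h1a : (1:ℝ)/a = t ^ (1-p)/(lam*p) := by
      have ht1p : t ^ (1-p) = (t ^ (p-1))⁻¹ := by
        rw [show (1-p) = -(p-1) by ring, Real.rpow_neg ht0.le]
      rw [hadef, ht1p]
      field_simp
    have hB4 : (1+t/2) ^ (-m) ≤ 2 ^ m * (1+t) ^ (-m) := by
      have h2 : (1+t/2) ^ (-m) ≤ ((1+t)/2) ^ (-m) :=
        Real.rpow_le_rpow_of_nonpos (by linarith) (by linarith) (by linarith)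
      have h3 : ((1+t)/2) ^ (-m) = (1+t) ^ (-m) / 2 ^ (-m) :=
        Real.div_rpow h1t.le (by norm_num) _
      have h4 : (2:ℝ) ^ (-m) = ((2:ℝ) ^ m)⁻¹ := Real.rpow_neg (by norm_num) m
      rw [h3, h4] at h2
      have e : (1+t) ^ (-m) / ((2:ℝ) ^ m)⁻¹ = 2 ^ m * (1+t) ^ (-m) := by
        field_simp
      linarith [h2, e]
    have hB5 : (1+t/2) ^ (-m) / a ≤ KB * (1+t) ^ (-m-p+1) := by
      have h5 : t ^ (1-p) ≤ (1+t) ^ (1-p) :=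
        Real.rpow_le_rpow ht0.le (by linarith) (by linarith)
      have hpm : (0:ℝ) < (1+t) ^ (-m) := Real.rpow_pos_of_pos h1t _
      have h2m : (0:ℝ) < (2:ℝ) ^ m := Real.rpow_pos_of_pos (by norm_num) _
      calc (1+t/2) ^ (-m) / a = (1+t/2) ^ (-m) * t ^ (1-p) / (lam*p) := by
            rw [div_eq_mul_one_div _ a, h1a]; ring
        _ ≤ (2 ^ m * (1+t) ^ (-m)) * ((1+t) ^ (1-p)) / (lam*p) := by
            gcongr
        _ = KB * (1+t) ^ (-m-p+1) := by
            rw [hKBdef, mul_assoc, ← Real.rpow_add h1t,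
              show (-m) + (1-p) = -m-p+1 by ring]
            ring
    have hB' : (∫ τ in (t/2)..t, Real.exp (-lam * (t ^ p - τ ^ p)) * (1 + τ) ^ (-m))
        ≤ KB * (1+t) ^ (-m-p+1) := hB3.trans hB5
    rw [hsplit]
    nlinarith [hA', hB', mul_pos h2pos hWpos]
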